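/- Fix an agent k and let z, z̄ ∈ [0,1]^n coincide in all coordinates except possibly coordinate k, with z_k, z̄_k ∈ [0,1) and with S(z) = S(z̄) = S(z_{−k}) ≠ ∅. Then row k of H(z) equals row k of H(z̄); consequently v_k(z_k, z_{−k}) is constant as a function of z_k over [0,1). -/
import Mathlib


open Matrix Filter Topology

/-- Maximum principle: a function harmonic off a set `S` (w.r.t. a primitive
stochastic matrix `P`), vanishing on `S`, with `S` nonempty, is nonpositive. -/
lemma nonpos_of_harmonic {n : ℕ} (P : Matrix (Fin n) (Fin n) ℝ)
    (hPnn : ∀ i j, 0 ≤ P i j) (hProw : ∀ i, ∑ j, P i j = 1)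
    (m : ℕ) (hPm : ∀ i j, 0 < (P ^ m) i j)
    (S : Fin n → Prop) (jstar : Fin n) (hjs : S jstar)
    (f : Fin n → ℝ) (h0 : ∀ i, S i → f i = 0)
    (hfp : ∀ i, ¬ S i → f i = ∑ l, P i l * f l) :
    ∀ i, f i ≤ 0 := by
  haveI : Nonempty (Fin n) := ⟨jstar⟩
  obtain ⟨i0, -, hmax⟩ := Finset.exists_max_image Finset.univ f Finset.univ_nonempty
  intro i
  by_contra hc
  push_neg at hc
  have hM : 0 < f i0 := lt_of_lt_of_le hc (hmax i (Finset.mem_univ i))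
  have hPt : ∀ t i j, 0 ≤ (P ^ t) i j := by
    intro t
    induction t with
    | zero =>
      intro i j
      rw [pow_zero]
      by_cases h : i = j <;> simp [Matrix.one_apply, h]
    | succ t ih =>
      intro i j
      rw [pow_succ, Matrix.mul_apply]
      exact Finset.sum_nonneg fun l _ => mul_nonneg (ih i l) (hPnn l j)
  have hstep : ∀ a, f a = f i0 → ¬ S a → ∀ l, 0 < P a l → f l = f i0 := by
    intro a hfa hna l hl
    have hsum : ∑ l', P a l' * (f i0 - f l') = 0 := by
      have h1 : ∑ l', P a l' * (f i0 - f l') =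
          (∑ l', P a l') * f i0 - ∑ l', P a l' * f l' := by
        rw [Finset.sum_mul, ← Finset.sum_sub_distrib]
        exact Finset.sum_congr rfl fun l' _ => by ring
      rw [h1, hProw, one_mul, ← hfp a hna, hfa]
      ring
    have hterm := (Finset.sum_eq_zero_iff_of_nonneg
      (fun l' _ => mul_nonneg (hPnn a l') (sub_nonneg.mpr (hmax l' (Finset.mem_univ l'))))).mp
      hsum l (Finset.mem_univ l)
    rcases mul_eq_zero.mp hterm with h | h
    · exact absurd h (ne_of_gt hl)
    · linarith
  have claim : ∀ t l, 0 < (P ^ t) i0 l → f l = f i0 := by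
    intro t
    induction t with
    | zero =>
      intro l hl
      rw [pow_zero] at hl
      by_cases h : i0 = l
      · rw [← h]
      · simp [Matrix.one_apply, h] at hl
    | succ t ih =>
      intro l hl
      rw [pow_succ, Matrix.mul_apply] at hl
      have hex : ∃ a, 0 < (P ^ t) i0 a * P a l := by
        by_contra hc2
        push_neg at hc2
        have : ∑ a, (P ^ t) i0 a * P a l ≤ 0 := Finset.sum_nonpos fun a _ => hc2 a
        linarith
      obtain ⟨a, ha⟩ := hex
      have ha1 : 0 < (P ^ t) i0 a := by
        rcases mul_pos_iff.mp ha with ⟨h1, h2⟩ | ⟨h1, h2⟩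
        · exact h1
        · linarith [hPt t i0 a]
      have ha2 : 0 < P a l := by
        rcases mul_pos_iff.mp ha with ⟨h1, h2⟩ | ⟨h1, h2⟩
        · exact h2
        · linarith [hPnn a l]
      have hfa := ih a ha1
      have hna : ¬ S a := fun hs => by rw [h0 a hs] at hfa; linarith
      exact hstep a hfa hna l ha2
  have hj0 := claim m jstar (hPm i0 jstar)
  rw [h0 jstar hjs] at hj0
  linarith

lemma zero_of_harmonic {n : ℕ} (P : Matrix (Fin n) (Fin n) ℝ)
    (hPnn : ∀ i j, 0 ≤ P i j) (hProw : ∀ i, ∑ j, P i j = 1)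
    (m : ℕ) (hPm : ∀ i j, 0 < (P ^ m) i j)
    (S : Fin n → Prop) (jstar : Fin n) (hjs : S jstar)
    (f : Fin n → ℝ) (h0 : ∀ i, S i → f i = 0)
    (hfp : ∀ i, ¬ S i → f i = ∑ l, P i l * f l) :
    ∀ i, f i = 0 := by
  intro i
  have h1 := nonpos_of_harmonic P hPnn hProw m hPm S jstar hjs f h0 hfp i
  have h2 : -f i ≤ 0 := nonpos_of_harmonic P hPnn hProw m hPm S jstar hjs (fun i => -f i)
    (fun i hi => by simp [h0 i hi])
    (fun i hi => by
      simp only [mul_neg, Finset.sum_neg_distrib]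
      rw [← hfp i hi]) i
  linarith

/-- Fix an agent `k` and let `z, z̄ ∈ [0,1]ⁿ` coincide in all coordinates
except possibly coordinate `k`, with `z_k, z̄_k ∈ [0,1)` and with
`S(z) = S(z̄) = S(z_{-k}) ≠ ∅`. Then row `k` of `H(z)` equals row `k` of `H(z̄)`;
consequently `v_k(z_k, z_{-k})` is constant in `z_k` over `[0,1)`. -/
theorem stmt_5 (n : ℕ) (hn : 2 ≤ n)
    (P : Matrix (Fin n) (Fin n) ℝ)
    (hPnn : ∀ i j, 0 ≤ P i j)
    (hProw : ∀ i, ∑ j, P i j = 1)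
    (hPdiag : ∀ i, P i i = 0)
    (hPprim : ∃ m : ℕ, ∀ i j, 0 < (P ^ m) i j)
    (σ2 : Fin n → ℝ) (hσ : ∀ i, 0 < σ2 i)
    (H : (Fin n → ℝ) → Matrix (Fin n) (Fin n) ℝ)
    (hH : ∀ z : Fin n → ℝ, (∀ i, z i ∈ Set.Icc (0 : ℝ) 1) →
      ∀ i j, Tendsto
        (fun t : ℕ => (((1 - Matrix.diagonal z) * P + Matrix.diagonal z) ^ t) i j)
        atTop (𝓝 (H z i j)))
    (k : Fin n) (z zb : Fin n → ℝ)
    (hz : ∀ i, z i ∈ Set.Icc (0 : ℝ) 1) (hzb : ∀ i, zb i ∈ Set.Icc (0 : ℝ) 1)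
    (hco : ∀ j, j ≠ k → zb j = z j)
    (hzk : z k ∈ Set.Ico (0 : ℝ) 1) (hzbk : zb k ∈ Set.Ico (0 : ℝ) 1)
    (hS : ∃ j, j ≠ k ∧ z j = 1) :
    (∀ j, H z k j = H zb k j) ∧
    (∑ j, (H z k j) ^ 2 * σ2 j = ∑ j, (H zb k j) ^ 2 * σ2 j) := by
  obtain ⟨m, hPm⟩ := hPprim
  obtain ⟨jstar, hjk, hjz⟩ := hS
  -- entrywise formula for Q(w)
  have hQe : ∀ (w : Fin n → ℝ) i j,
      ((1 - Matrix.diagonal w) * P + Matrix.diagonal w) i j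
        = (1 - w i) * P i j + Matrix.diagonal w i j := by
    intro w i j
    simp [Matrix.sub_mul, Matrix.sub_apply, Matrix.diagonal_mul, Matrix.add_apply]
    ring
  -- stubborn rows of powers
  have hstubrow : ∀ (w : Fin n → ℝ) i, w i = 1 → ∀ (t : ℕ) (j : Fin n),
      (((1 - Matrix.diagonal w) * P + Matrix.diagonal w) ^ t) i j
        = if i = j then 1 else 0 := by
    intro w i hwi t
    induction t with
    | zero =>
      intro j
      rw [pow_zero, Matrix.one_apply]
    | succ t ih =>
      intro j
      rw [pow_succ', Matrix.mul_apply]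
      have hrow : ∀ l, ((1 - Matrix.diagonal w) * P + Matrix.diagonal w) i l
          = if i = l then 1 else 0 := by
        intro l
        rw [hQe, hwi]
        simp [Matrix.diagonal_apply, hwi]
      calc ∑ l, ((1 - Matrix.diagonal w) * P + Matrix.diagonal w) i l *
              (((1 - Matrix.diagonal w) * P + Matrix.diagonal w) ^ t) l j
          = ∑ l, (if i = l then 1 else 0) *
              (((1 - Matrix.diagonal w) * P + Matrix.diagonal w) ^ t) l j := by
            exact Finset.sum_congr rfl fun l _ => by rw [hrow l]
        _ = (((1 - Matrix.diagonal w) * P + Matrix.diagonal w) ^ t) i j := by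
            simp [ite_mul]
        _ = if i = j then 1 else 0 := ih j
  -- H on stubborn rows is identity
  have hHstub : ∀ w (_ : ∀ i, w i ∈ Set.Icc (0:ℝ) 1) i, w i = 1 → ∀ j,
      H w i j = if i = j then 1 else 0 := by
    intro w hw i hwi j
    refine tendsto_nhds_unique (hH w hw i j) ?_
    simp only [hstubrow w i hwi]
    exact tendsto_const_nhds
  -- fixed-point equation on non-stubborn rows
  have hfixpt : ∀ w (_ : ∀ i, w i ∈ Set.Icc (0:ℝ) 1) i, w i < 1 → ∀ j,
      H w i j = ∑ l, P i l * H w l j := by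
    intro w hw i hwi j
    have h1 : Tendsto (fun t : ℕ =>
        (((1 - Matrix.diagonal w) * P + Matrix.diagonal w) ^ (t+1)) i j)
        atTop (𝓝 (H w i j)) := (hH w hw i j).comp (tendsto_add_atTop_nat 1)
    have h2 : Tendsto (fun t : ℕ =>
        (((1 - Matrix.diagonal w) * P + Matrix.diagonal w) ^ (t+1)) i j)
        atTop (𝓝 (∑ l, ((1 - Matrix.diagonal w) * P + Matrix.diagonal w) i l * H w l j)) := by
      have hrw : ∀ t : ℕ, (((1 - Matrix.diagonal w) * P + Matrix.diagonal w) ^ (t+1)) i j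
          = ∑ l, ((1 - Matrix.diagonal w) * P + Matrix.diagonal w) i l *
              (((1 - Matrix.diagonal w) * P + Matrix.diagonal w) ^ t) l j := by
        intro t
        rw [pow_succ', Matrix.mul_apply]
      simp only [hrw]
      exact tendsto_finset_sum _ fun l _ => ((hH w hw l j).const_mul _)
    have heq := tendsto_nhds_unique h1 h2
    have hexp : ∑ l, ((1 - Matrix.diagonal w) * P + Matrix.diagonal w) i l * H w l j
        = (1 - w i) * ∑ l, P i l * H w l j + w i * H w i j := by
      have hterm : ∀ l, ((1 - Matrix.diagonal w) * P + Matrix.diagonal w) i l * H w l j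
          = (1 - w i) * (P i l * H w l j) + Matrix.diagonal w i l * H w l j := by
        intro l
        rw [hQe]
        ring
      rw [Finset.sum_congr rfl fun l _ => hterm l, Finset.sum_add_distrib, ← Finset.mul_sum]
      congr 1
      simp [Matrix.diagonal_apply, ite_mul]
    have h1w : (1 - w i) ≠ 0 := by intro h; apply absurd hwi; simp; linarith
    have hlin : (1 - w i) * H w i j = (1 - w i) * ∑ l, P i l * H w l j := by
      rw [hexp] at heq
      nlinarith [heq]
    exact mul_left_cancel₀ h1w hlin
  -- the difference function, per column, is harmonic and vanishes on stubborn set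
  have hmain : ∀ j i, H z i j = H zb i j := by
    intro j
    have h0 : ∀ i, z i = 1 → H z i j - H zb i j = 0 := by
      intro i hi
      have hik : i ≠ k := by
        intro h
        rw [h] at hi
        exact absurd hi (ne_of_lt hzk.2)
      have hzbi : zb i = 1 := by rw [hco i hik]; exact hi
      rw [hHstub z hz i hi j, hHstub zb hzb i hzbi j]
      ring
    have hfp : ∀ i, ¬ z i = 1 → H z i j - H zb i j = ∑ l, P i l * (H z l j - H zb l j) := by
      intro i hi
      have hzi : z i < 1 := lt_of_le_of_ne (hz i).2 hi
      have hzbi : zb i < 1 := by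
        by_cases h : i = k
        · rw [h]; exact hzbk.2
        · rw [hco i h]; exact hzi
      rw [hfixpt z hz i hzi j, hfixpt zb hzb i hzbi j]
      rw [← Finset.sum_sub_distrib]
      exact Finset.sum_congr rfl fun l _ => by ring
    have hzero := zero_of_harmonic P hPnn hProw m hPm (fun i => z i = 1) jstar hjz
      (fun i => H z i j - H zb i j) h0 hfp
    intro i
    have h : H z i j - H zb i j = 0 := hzero i
    linarith
  constructor
  · exact fun j => hmain j k
  · exact Finset.sum_congr rfl fun j _ => by rw [hmain j k]
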